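/- Under the MIS/RMIS tableau setup, assume the inner weights satisfy (b^I)^⊺𝟙 = 1 and (b^I)^⊺c^I = 1/2. Then (b^O)^⊺ A^{s,f} A^{f,s} c^O = (1/2)(v^O)^⊺ A^O c^O, where v^O ∈ ℝ^{s^O} is defined by v^O_1 = 0, v^O_i = b^O_i (c^O_i − c^O_{i−1}) + (c^O_{i+1} − c^O_{i−1}) Σ_{j=i+1}^{s^O} b^O_j for 1 < i < s^O, and v^O_{s^O} = b^O_{s^O}(c^O_{s^O} − c^O_{s^O−1}). -/
import Mathlib


open Matrix BigOperators Finset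

/-- The increments `d_j = c^O_{j+1} - c^O_j` (with `d_{s^O} = 1 - c^O_{s^O}`). -/
noncomputable def misD (sO : ℕ) (cO : Fin sO → ℝ) (j : Fin sO) : ℝ :=
  if h : j.val + 1 < sO then cO ⟨j.val + 1, h⟩ - cO j else 1 - cO j

/-- The fast-fast GARK coefficient matrix `A^{f,f}` of the MIS/RMIS tableau. -/
noncomputable def misAff (sI sO : ℕ) (AI : Matrix (Fin sI) (Fin sI) ℝ)
    (bI : Fin sI → ℝ) (cO : Fin sO → ℝ) :
    Matrix (Fin sO × Fin sI) (Fin sO × Fin sI) ℝ :=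
  fun ip jq =>
    if jq.1 < ip.1 then misD sO cO jq.1 * bI jq.2
    else if jq.1 = ip.1 then misD sO cO ip.1 * AI ip.2 jq.2
    else 0

/-- The slow-fast GARK coefficient matrix `A^{s,f}` of the MIS/RMIS tableau. -/
noncomputable def misAsf (sI sO : ℕ) (bI : Fin sI → ℝ) (cO : Fin sO → ℝ) :
    Matrix (Fin sO) (Fin sO × Fin sI) ℝ :=
  fun i jq => if jq.1 < i then misD sO cO jq.1 * bI jq.2 else 0

/-- The fast-slow GARK coefficient matrix `A^{f,s}` of the MIS/RMIS tableau. -/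
noncomputable def misAfs (sI sO : ℕ) (cI : Fin sI → ℝ)
    (AO : Matrix (Fin sO) (Fin sO) ℝ) (bO : Fin sO → ℝ) :
    Matrix (Fin sO × Fin sI) (Fin sO) ℝ :=
  fun ip j =>
    if ip.1.val = 0 then
      (if h : 1 < sO then cI ip.2 * AO ⟨1, h⟩ j else 0)
    else if h : ip.1.val + 1 < sO then
      AO ip.1 j + cI ip.2 * (AO ⟨ip.1.val + 1, h⟩ j - AO ip.1 j)
    else
      AO ip.1 j + cI ip.2 * (bO j - AO ip.1 j)

/-- The fast abscissae `c^f` of the MIS/RMIS tableau. -/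
noncomputable def misCf (sI sO : ℕ) (cI : Fin sI → ℝ) (cO : Fin sO → ℝ) :
    Fin sO × Fin sI → ℝ :=
  fun ip => cO ip.1 + misD sO cO ip.1 * cI ip.2

/-- The RMIS fast weights `b^f` (i-th block is `b^O_i e_1`). -/
noncomputable def misBf (sI sO : ℕ) (bO : Fin sO → ℝ) : Fin sO × Fin sI → ℝ :=
  fun ip => if ip.2.val = 0 then bO ip.1 else 0

/-- The vector `v^O` appearing in the fourth-order RMIS condition. -/
noncomputable def misV (sO : ℕ) (bO cO : Fin sO → ℝ) (i : Fin sO) : ℝ :=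
  if i.val = 0 then 0
  else if h : i.val + 1 < sO then
    bO i * (cO i - cO ⟨i.val - 1, by have := i.isLt; omega⟩) +
      (cO ⟨i.val + 1, h⟩ - cO ⟨i.val - 1, by have := i.isLt; omega⟩) *
        ∑ j ∈ Finset.univ.filter (fun j => i < j), bO j
  else bO i * (cO i - cO ⟨i.val - 1, by have := i.isLt; omega⟩)

lemma mis_lin {sI : ℕ} (bI cI : Fin sI → ℝ)
    (hbI1 : ∑ q, bI q = 1) (hbI2 : ∑ q, bI q * cI q = 1 / 2) (a e : ℝ) :
    ∑ q, bI q * (a + cI q * e) = a + e / 2 := by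
  have h : ∑ q, bI q * (a + cI q * e) = (∑ q, bI q) * a + (∑ q, bI q * cI q) * e := by
    rw [Finset.sum_mul, Finset.sum_mul, ← Finset.sum_add_distrib]
    exact Finset.sum_congr rfl (fun q _ => by ring)
  rw [h, hbI1, hbI2]; ring

lemma mis_key (m : ℕ) (hm : 2 ≤ m) (b c w : ℕ → ℝ) (S : ℝ)
    (D B F V : ℕ → ℝ)
    (hD : ∀ n, D n = if n + 1 < m then c (n+1) - c n else 1 - c n)
    (hB : ∀ n, B n = ∑ i ∈ Finset.Ico (n+1) m, b i)
    (hF : ∀ n, F n = if n = 0 then (1/2) * w 1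
        else if n + 1 < m then (1/2) * (w n + w (n+1)) else (1/2) * (w n + S))
    (hV : ∀ n, V n = if n = 0 then 0
        else if n + 1 < m then b n * (c n - c (n-1)) + (c (n+1) - c (n-1)) * B n
        else b n * (c n - c (n-1))) :
    ∑ n ∈ Finset.range m, B n * (D n * F n)
      = (1/2) * ∑ n ∈ Finset.range m, V n * w n := by
  have hB0 : ∀ n, m ≤ n + 1 → B n = 0 := by
    intro n h
    rw [hB, Finset.Ico_eq_empty (by omega), Finset.sum_empty]
  have step1 : ∀ n ∈ Finset.range m, B n * (D n * F n)
      = (1/2) * ((if 1 ≤ n then B n * D n * w n else 0)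
        + (if n + 1 < m then B n * D n * w (n+1) else 0)) := by
    intro n hn
    rw [hF]
    by_cases h0 : n = 0
    · subst h0
      rw [if_pos rfl, if_neg (by omega : ¬ (1:ℕ) ≤ 0),
        if_pos (show (0:ℕ)+1 < m by omega)]
      ring
    · by_cases h1 : n + 1 < m
      · simp only [if_neg h0, if_pos h1, if_pos (show 1 ≤ n by omega)]
        ring
      · have hb := hB0 n (by omega)
        simp only [if_neg h0, if_neg h1, if_pos (show 1 ≤ n by omega), hb]
        ring
  rw [Finset.sum_congr rfl step1, ← Finset.mul_sum, Finset.sum_add_distrib]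
  congr 1
  have hC : ∑ n ∈ Finset.range m, (if n + 1 < m then B n * D n * w (n+1) else 0)
      = ∑ n ∈ Finset.range m, (if 1 ≤ n then B (n-1) * D (n-1) * w n else 0) := by
    rw [← Finset.sum_filter, ← Finset.sum_filter]
    have e1 : (Finset.range m).filter (fun n => n + 1 < m) = Finset.range (m-1) := by
      ext k; simp; omega
    have e2 : (Finset.range m).filter (fun n => 1 ≤ n) = Finset.Ico 1 m := by
      ext k; simp; omega
    rw [e1, e2, Finset.sum_Ico_eq_sum_range (fun k => B (k-1) * D (k-1) * w k) 1 m]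
    apply Finset.sum_congr rfl
    intro i _
    have h1 : 1 + i - 1 = i := by omega
    have h2 : 1 + i = i + 1 := by omega
    rw [h1, h2]
  rw [hC, ← Finset.sum_add_distrib]
  apply Finset.sum_congr rfl
  intro n hn
  have hnm : n < m := Finset.mem_range.mp hn
  by_cases h0 : n = 0
  · subst h0; simp [hV]
  · have h1 : 1 ≤ n := by omega
    simp only [if_pos h1]
    have hd1 : D (n-1) = c n - c (n-1) := by
      rw [hD, if_pos (by omega), (by omega : n - 1 + 1 = n)]
    have hb1 : B (n-1) = b n + B n := by
      rw [hB, hB, (by omega : n - 1 + 1 = n)]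
      exact Finset.sum_eq_sum_Ico_succ_bot hnm b
    by_cases h2 : n + 1 < m
    · rw [hV, if_neg h0, if_pos h2, hD, if_pos h2, hd1, hb1]
      ring
    · have hb2 : B n = 0 := hB0 n (by omega)
      rw [hV, if_neg h0, if_neg h2, hd1, hb1, hb2]
      ring

/-- If `(b^I)ᵀ𝟙 = 1` and `(b^I)ᵀc^I = 1/2`, then
`(b^O)ᵀ A^{s,f} A^{f,s} c^O = (1/2)(v^O)ᵀ A^O c^O`. -/
theorem bO_asf_afs_cO (sI sO : ℕ) (hsI : 1 ≤ sI) (hsO : 2 ≤ sO)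
    (AI : Matrix (Fin sI) (Fin sI) ℝ) (bI cI : Fin sI → ℝ)
    (AO : Matrix (Fin sO) (Fin sO) ℝ) (bO cO : Fin sO → ℝ)
    (hcO1 : cO ⟨0, by omega⟩ = 0)
    (hbI1 : ∑ q, bI q = 1)
    (hbI2 : ∑ q, bI q * cI q = 1 / 2) :
    bO ⬝ᵥ (misAsf sI sO bI cO *ᵥ (misAfs sI sO cI AO bO *ᵥ cO))
      = (1 / 2) * (misV sO bO cO ⬝ᵥ (AO *ᵥ cO)) := by
  classical
  have h1sO : 1 < sO := by omega
  set X : Fin sO × Fin sI → ℝ := misAfs sI sO cI AO bO *ᵥ cO with hXd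
  -- nat-indexed data
  set S : ℝ := ∑ k, bO k * cO k with hS
  set bN : ℕ → ℝ := fun n => if h : n < sO then bO ⟨n, h⟩ else 0 with hbN
  set cN : ℕ → ℝ := fun n => if h : n < sO then cO ⟨n, h⟩ else 0 with hcN
  set wN : ℕ → ℝ := fun n => if h : n < sO then (AO *ᵥ cO) ⟨n, h⟩ else 0 with hwN
  set DN : ℕ → ℝ := fun n => if n + 1 < sO then cN (n+1) - cN n else 1 - cN n with hDN
  set BN : ℕ → ℝ := fun n => ∑ i ∈ Finset.Ico (n+1) sO, bN i with hBN
  set FN : ℕ → ℝ := fun n => if n = 0 then (1/2) * wN 1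
      else if n + 1 < sO then (1/2) * (wN n + wN (n+1)) else (1/2) * (wN n + S) with hFN
  set VN : ℕ → ℝ := fun n => if n = 0 then 0
      else if n + 1 < sO then bN n * (cN n - cN (n-1)) + (cN (n+1) - cN (n-1)) * BN n
      else bN n * (cN n - cN (n-1)) with hVN
  have hbN' : ∀ i : Fin sO, bO i = bN i.val := fun i => by simp [hbN, i.isLt]
  have hcN' : ∀ i : Fin sO, cO i = cN i.val := fun i => by simp [hcN, i.isLt]
  have hwN' : ∀ i : Fin sO, (AO *ᵥ cO) i = wN i.val := fun i => by simp [hwN, i.isLt]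
  -- B conversion
  have hBeq : ∀ i : Fin sO,
      (∑ j ∈ Finset.univ.filter (fun j => i < j), bO j) = BN i.val := by
    intro i
    rw [Finset.sum_filter]
    have : ∀ j : Fin sO, (if i < j then bO j else 0)
        = (fun n => if i.val < n then bN n else 0) j.val := by
      intro j
      simp only [Fin.lt_def, hbN']
    rw [Finset.sum_congr rfl (fun j _ => this j),
      Fin.sum_univ_eq_sum_range (fun n => if i.val < n then bN n else 0) sO,
      ← Finset.sum_filter]
    congr 1
    ext k; simp; omega
  -- row sums of Afs against cO
  have hX : ∀ (j : Fin sO) (q : Fin sI),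
      X (j, q)
        = if j.val = 0 then 0 + cI q * (AO *ᵥ cO) ⟨1, h1sO⟩
          else if h : j.val + 1 < sO then
            (AO *ᵥ cO) j + cI q * ((AO *ᵥ cO) ⟨j.val + 1, h⟩ - (AO *ᵥ cO) j)
          else (AO *ᵥ cO) j + cI q * (S - (AO *ᵥ cO) j) := by
    intro j q
    simp only [hXd, mulVec, dotProduct, misAfs]
    by_cases h0 : j.val = 0
    · simp only [if_pos h0, dif_pos h1sO, zero_add, Finset.mul_sum]
      exact Finset.sum_congr rfl (fun k _ => by ring)
    · by_cases h1 : j.val + 1 < sO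
      · simp only [if_neg h0, dif_pos h1]
        simp only [add_mul, mul_sub, sub_mul, Finset.sum_add_distrib,
          Finset.sum_sub_distrib, Finset.mul_sum]
        ring_nf
      · simp only [if_neg h0, dif_neg h1]
        simp only [add_mul, mul_sub, sub_mul, Finset.sum_add_distrib,
          Finset.sum_sub_distrib, Finset.mul_sum, hS]
        ring_nf
  -- F conversion
  have hF : ∀ j : Fin sO,
      (∑ q, bI q * X (j, q)) = FN j.val := by
    intro j
    by_cases h0 : j.val = 0
    · rw [Finset.sum_congr rfl (fun q _ => by rw [hX j q, if_pos h0]),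
        mis_lin bI cI hbI1 hbI2]
      simp only [hFN, if_pos h0, hwN']
      ring
    · by_cases h1 : j.val + 1 < sO
      · rw [Finset.sum_congr rfl (fun q _ => by rw [hX j q, if_neg h0, dif_pos h1]),
          mis_lin bI cI hbI1 hbI2]
        simp only [hFN, if_neg h0, if_pos h1, hwN']
        ring
      · rw [Finset.sum_congr rfl (fun q _ => by rw [hX j q, if_neg h0, dif_neg h1]),
          mis_lin bI cI hbI1 hbI2]
        simp only [hFN, if_neg h0, if_neg h1, hwN']
        ring
  -- LHS as Fin-sum over j
  have hLHS : bO ⬝ᵥ (misAsf sI sO bI cO *ᵥ X)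
      = ∑ n ∈ Finset.range sO, BN n * (DN n * FN n) := by
    simp only [dotProduct, mulVec, misAsf, Fintype.sum_prod_type, Finset.mul_sum]
    rw [Finset.sum_comm]
    have step : ∀ j : Fin sO,
        (∑ i : Fin sO, ∑ q : Fin sI,
          bO i * ((if j < i then misD sO cO j * bI q else 0)
            * X (j, q)))
        = (fun n => BN n * (DN n * FN n)) j.val := by
      intro j
      have inner : ∀ i : Fin sO, (∑ q : Fin sI,
          bO i * ((if j < i then misD sO cO j * bI q else 0)
            * X (j, q)))
          = (if j < i then bO i else 0) * (misD sO cO j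
              * ∑ q, bI q * X (j, q)) := by
        intro i
        by_cases h : j < i
        · simp only [if_pos h, Finset.mul_sum]
          exact Finset.sum_congr rfl (fun q _ => by ring)
        · simp only [if_neg h, zero_mul, mul_zero, Finset.sum_const_zero]
      rw [Finset.sum_congr rfl (fun i _ => inner i), ← Finset.sum_mul, hF j]
      have hBj : (∑ i : Fin sO, if j < i then bO i else 0) = BN j.val := by
        rw [← Finset.sum_filter]; exact hBeq j
      rw [hBj]
      have hDj : misD sO cO j = DN j.val := by
        simp only [misD, hDN]
        by_cases h : j.val + 1 < sO
        · rw [dif_pos h, if_pos h, hcN' j, hcN' ⟨j.val+1, h⟩]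
        · rw [dif_neg h, if_neg h, hcN' j]
      rw [hDj]
    rw [Finset.sum_congr rfl (fun j _ => step j)]
    exact Fin.sum_univ_eq_sum_range (fun n => BN n * (DN n * FN n)) sO
  -- RHS as range sum
  have hRHS : misV sO bO cO ⬝ᵥ (AO *ᵥ cO) = ∑ n ∈ Finset.range sO, VN n * wN n := by
    rw [dotProduct]
    have step : ∀ i : Fin sO, misV sO bO cO i * (AO *ᵥ cO) i
        = (fun n => VN n * wN n) i.val := by
      intro i
      have hv : misV sO bO cO i = VN i.val := by
        simp only [misV, hVN]
        by_cases h0 : i.val = 0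
        · rw [if_pos h0, if_pos h0]
        · by_cases h1 : i.val + 1 < sO
          · rw [if_neg h0, if_neg h0, dif_pos h1, if_pos h1, hBeq i,
              hbN' i, hcN' i, hcN' ⟨i.val - 1, by omega⟩, hcN' ⟨i.val + 1, h1⟩]
          · rw [if_neg h0, if_neg h0, dif_neg h1, if_neg h1,
              hbN' i, hcN' i, hcN' ⟨i.val - 1, by omega⟩]
      rw [hv, hwN' i]
    rw [Finset.sum_congr rfl (fun i _ => step i)]
    exact Fin.sum_univ_eq_sum_range (fun n => VN n * wN n) sO
  rw [hLHS, hRHS]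
  exact mis_key sO hsO bN cN wN S DN BN FN VN
    (fun n => rfl) (fun n => rfl) (fun n => rfl) (fun n => rfl)
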